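/- arXiv:1405.2238 — 4 statements merged into one kernel-verified Lean document; each statement's English description precedes it below -/
import Mathlib

section
/- Every maxitive measure on a prepaving is alternating of infinite order: if ν is a maxitive measure on a prepaving 𝓔 on a nonempty set E, then (−1)^{n+1} Δ_{G₁}⋯Δ_{Gₙ} ν(G) ≥ 0 for all n ≥ 1 and all G, G₁, …, Gₙ ∈ 𝓔. -/
open scoped ENNReal
open Set

/-- Subtraction on extended reals with the conventions `∞ - ∞ = 0` and `-∞ + ∞ = 0`
(i.e. `-∞ - (-∞) = 0`). -/
noncomputable def esub (x y : EReal) : EReal :=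
  if (x = ⊤ ∧ y = ⊤) ∨ (x = ⊥ ∧ y = ⊥) then 0 else x - y

/-- The Choquet difference operator `Δ_{G₁} f (G) = f (G ∪ G₁) - f G`. -/
noncomputable def choquetDiff {E : Type*} (G₁ : Set E) (f : Set E → EReal) :
    Set E → EReal :=
  fun G => esub (f (G ∪ G₁)) (f G)

/-- Iterated Choquet difference: `iterDiff [G₁, …, Gₙ] f = Δ_{G₁} (Δ_{G₂} ⋯ Δ_{Gₙ} f)`. -/
noncomputable def iterDiff {E : Type*} (l : List (Set E)) (f : Set E → EReal) :
    Set E → EReal :=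
  l.foldr choquetDiff f

lemma esub_self (x : EReal) : esub x x = 0 := by
  unfold esub
  induction x using EReal.rec <;> simp

lemma esub_nonneg {x y : EReal} (h : y ≤ x) : 0 ≤ esub x y := by
  unfold esub
  split
  · exact le_rfl
  · rename_i hbad
    push_neg at hbad
    induction y using EReal.rec with
    | bot =>
      rcases eq_or_ne x ⊥ with hx | hx
      · exact absurd rfl (hbad.2 hx)
      · rw [EReal.sub_bot hx]; exact le_top
    | coe r =>
      have : (0 : EReal) = (r : EReal) - (r : EReal) := by norm_cast; simp
      rw [this]
      exact EReal.sub_le_sub h le_rfl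
    | top =>
      exact absurd rfl (hbad.1 (top_le_iff.mp h))

lemma esub_nonpos {x y : EReal} (h : x ≤ y) : esub x y ≤ 0 := by
  unfold esub
  split
  · exact le_rfl
  · rename_i hbad
    push_neg at hbad
    induction y using EReal.rec with
    | bot =>
      exact absurd rfl (hbad.2 (le_bot_iff.mp h))
    | coe r =>
      have : (0 : EReal) = (r : EReal) - (r : EReal) := by norm_cast; simp
      rw [this]
      exact EReal.sub_le_sub h le_rfl
    | top =>
      rw [EReal.sub_top]; exact bot_le

lemma esub_anti_right {x y y' : EReal} (h1 : y ≤ y') (h2 : y' ≤ x) :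
    esub x y' ≤ esub x y := by
  by_cases hL : (x = ⊤ ∧ y' = ⊤) ∨ (x = ⊥ ∧ y' = ⊥)
  · have : esub x y' = 0 := by unfold esub; rw [if_pos hL]
    rw [this]
    exact esub_nonneg (h1.trans h2)
  · have hLv : esub x y' = x - y' := by unfold esub; rw [if_neg hL]
    by_cases hR : (x = ⊤ ∧ y = ⊤) ∨ (x = ⊥ ∧ y = ⊥)
    · rcases hR with ⟨hx, hy⟩ | ⟨hx, hy⟩
      · exact absurd (Or.inl ⟨hx, top_le_iff.mp (hy ▸ h1)⟩) hL
      · exact absurd (Or.inr ⟨hx, le_bot_iff.mp (hx ▸ h2)⟩) hL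
    · have hRv : esub x y = x - y := by unfold esub; rw [if_neg hR]
      rw [hLv, hRv]
      exact EReal.sub_le_sub le_rfl h1

lemma esub_anti_right' {x y y' : EReal} (h1 : x ≤ y') (h2 : y' ≤ y) :
    esub x y ≤ esub x y' := by
  by_cases hR : (x = ⊤ ∧ y' = ⊤) ∨ (x = ⊥ ∧ y' = ⊥)
  · have : esub x y' = 0 := by unfold esub; rw [if_pos hR]
    rw [this]
    exact esub_nonpos (h1.trans h2)
  · have hRv : esub x y' = x - y' := by unfold esub; rw [if_neg hR]
    by_cases hL : (x = ⊤ ∧ y = ⊤) ∨ (x = ⊥ ∧ y = ⊥)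
    · rcases hL with ⟨hx, hy⟩ | ⟨hx, hy⟩
      · exact absurd (Or.inl ⟨hx, top_le_iff.mp (hx ▸ h1)⟩) hR
      · exact absurd (Or.inr ⟨hx, le_bot_iff.mp (hy ▸ h2)⟩) hR
    · have hLv : esub x y = x - y := by unfold esub; rw [if_neg hL]
      rw [hLv, hRv]
      exact EReal.sub_le_sub le_rfl h2

lemma diffOp_nonneg {F : ℝ≥0∞ → EReal} (hF : Monotone F) (b a : ℝ≥0∞) :
    0 ≤ esub (F (a ⊔ b)) (F a) :=
  esub_nonneg (hF le_sup_left)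

lemma diffOp_nonpos {F : ℝ≥0∞ → EReal} (hF : Antitone F) (b a : ℝ≥0∞) :
    esub (F (a ⊔ b)) (F a) ≤ 0 :=
  esub_nonpos (hF le_sup_left)

lemma diffOp_anti {F : ℝ≥0∞ → EReal} (hF : Monotone F) (b : ℝ≥0∞) :
    Antitone (fun a => esub (F (a ⊔ b)) (F a)) := by
  intro a a' h
  simp only
  rcases le_total b a with hba | hab
  · rw [sup_eq_left.mpr hba, sup_eq_left.mpr (hba.trans h), esub_self, esub_self]
  · rcases le_total b a' with hba' | ha'b
    · rw [sup_eq_left.mpr hba', sup_eq_right.mpr hab, esub_self]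
      exact esub_nonneg (hF hab)
    · rw [sup_eq_right.mpr hab, sup_eq_right.mpr ha'b]
      exact esub_anti_right (hF h) (hF ha'b)

lemma diffOp_mono {F : ℝ≥0∞ → EReal} (hF : Antitone F) (b : ℝ≥0∞) :
    Monotone (fun a => esub (F (a ⊔ b)) (F a)) := by
  intro a a' h
  simp only
  rcases le_total b a with hba | hab
  · rw [sup_eq_left.mpr hba, sup_eq_left.mpr (hba.trans h), esub_self, esub_self]
  · rcases le_total b a' with hba' | ha'b
    · rw [sup_eq_left.mpr hba', sup_eq_right.mpr hab, esub_self]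
      exact esub_nonpos (hF hab)
    · rw [sup_eq_right.mpr hab, sup_eq_right.mpr ha'b]
      exact esub_anti_right' (hF ha'b) (hF h)

lemma maxitive_key {E : Type*} (𝓔 : Set (Set E))
    (h_union : ∀ G G' : Set E, G ∈ 𝓔 → G' ∈ 𝓔 → G ∪ G' ∈ 𝓔)
    (ν : Set E → ℝ≥0∞)
    (hν_max : ∀ G G' : Set E, G ∈ 𝓔 → G' ∈ 𝓔 → ν (G ∪ G') = max (ν G) (ν G'))
    (l : List (Set E)) (hl : l ≠ []) (hl_mem : ∀ G ∈ l, G ∈ 𝓔) :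
    ∃ F : ℝ≥0∞ → EReal,
      (∀ G ∈ 𝓔, iterDiff l (fun A => ((ν A : EReal))) G = F (ν G)) ∧
      (Odd l.length → Antitone F ∧ ∀ a, 0 ≤ F a) ∧
      (Even l.length → Monotone F ∧ ∀ a, F a ≤ 0) := by
  induction l with
  | nil => exact absurd rfl hl
  | cons G₁ rest ih =>
    have hG₁ : G₁ ∈ 𝓔 := hl_mem G₁ List.mem_cons_self
    rcases eq_or_ne rest [] with hre | hre
    · subst hre
      have hmono : Monotone (fun a : ℝ≥0∞ => (a : EReal)) :=
        fun _ _ h => EReal.coe_ennreal_le_coe_ennreal_iff.2 h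
      refine ⟨fun a => esub ((a ⊔ ν G₁ : ℝ≥0∞) : EReal) ((a : ℝ≥0∞) : EReal), ?_, ?_, ?_⟩
      · intro G hG
        show esub ((ν (G ∪ G₁) : ℝ≥0∞) : EReal) _ = _
        rw [hν_max G G₁ hG hG₁]
        rfl
      · intro _
        exact ⟨diffOp_anti hmono (ν G₁), diffOp_nonneg hmono (ν G₁)⟩
      · intro he
        simp at he
    · obtain ⟨F', hval, hodd, heven⟩ := ih hre
        (fun G hG => hl_mem G (List.mem_cons_of_mem _ hG))
      refine ⟨fun a => esub (F' (a ⊔ ν G₁)) (F' a), ?_, ?_, ?_⟩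
      · intro G hG
        show esub (iterDiff rest _ (G ∪ G₁)) (iterDiff rest _ G) = _
        rw [hval (G ∪ G₁) (h_union G G₁ hG hG₁), hval G hG, hν_max G G₁ hG hG₁]
      · intro ho
        have he : Even rest.length := by
          rcases ho with ⟨k, hk⟩
          simp only [List.length_cons] at hk
          exact ⟨k, by omega⟩
        obtain ⟨hm, _⟩ := heven he
        exact ⟨diffOp_anti hm (ν G₁), diffOp_nonneg hm (ν G₁)⟩
      · intro he
        have ho : Odd rest.length := by
          rcases he with ⟨k, hk⟩
          simp only [List.length_cons] at hk
          exact ⟨k - 1, by omega⟩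
        obtain ⟨ha, _⟩ := hodd ho
        exact ⟨diffOp_mono ha (ν G₁), diffOp_nonpos ha (ν G₁)⟩

/-- Every maxitive measure on a prepaving is alternating of infinite order:
for every `n ≥ 1` (here `n = l.length` with `l = [G₁, …, Gₙ]` a nonempty list of
elements of the prepaving `𝓔`) and every `G ∈ 𝓔`,
`(-1)^(n+1) * Δ_{G₁} ⋯ Δ_{Gₙ} ν (G) ≥ 0`. -/
theorem maxitive_measure_alternating {E : Type*} [Nonempty E] (𝓔 : Set (Set E))
    (h_empty : (∅ : Set E) ∈ 𝓔)
    (h_union : ∀ G G' : Set E, G ∈ 𝓔 → G' ∈ 𝓔 → G ∪ G' ∈ 𝓔)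
    (ν : Set E → ℝ≥0∞) (hν_empty : ν ∅ = 0)
    (hν_max : ∀ G G' : Set E, G ∈ 𝓔 → G' ∈ 𝓔 → ν (G ∪ G') = max (ν G) (ν G'))
    (l : List (Set E)) (hl : l ≠ []) (hl_mem : ∀ G ∈ l, G ∈ 𝓔)
    (G : Set E) (hG : G ∈ 𝓔) :
    0 ≤ (-1 : EReal) ^ (l.length + 1) * iterDiff l (fun A => ((ν A : EReal))) G := by
  obtain ⟨F, hval, hodd, heven⟩ := maxitive_key 𝓔 h_union ν hν_max l hl hl_mem
  rw [hval G hG]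
  rcases Nat.even_or_odd l.length with he | ho
  · have h1 : Odd (l.length + 1) := Even.add_one he
    rw [Odd.neg_one_pow h1, neg_one_mul]
    have := (heven he).2 (ν G)
    rw [← neg_zero]
    exact EReal.neg_le_neg_iff.mpr this
  · have h1 : Even (l.length + 1) := Odd.add_one ho
    rw [Even.neg_one_pow h1, one_mul]
    exact (hodd ho).2 (ν G)
end

section
/- Let ν be a maxitive measure on a σ-algebra 𝓑 admitting a 𝓑-measurable cardinal density c (i.e. ν(B) = sup_{x∈B} c(x) for all B ∈ 𝓑). Then for every maxitive measure τ on 𝓑, ν ≪ τ if and only if ν ⋘ τ. In particular, ν is autocontinuous (ν ⋘ ν). -/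
open scoped ENNReal
open Set Filter MeasureTheory

variable {E : Type*}

/-- `f : E → [0,∞]` is `𝓑`-measurable: `{f > t}` is measurable for every `t`. -/
def Premeasurable [MeasurableSpace E] (f : E → ℝ≥0∞) : Prop :=
  ∀ t : ℝ≥0∞, MeasurableSet {x | t < f x}

/-- A maxitive measure on the σ-algebra of measurable subsets of `E`. -/
def Maxitive [MeasurableSpace E] (ν : Set E → ℝ≥0∞) : Prop :=
  ν ∅ = 0 ∧ ∀ A B : Set E, MeasurableSet A → MeasurableSet B →
    ν (A ∪ B) = max (ν A) (ν B)

/-- A σ-maxitive measure: a maxitive measure commuting with countable nondecreasing unions. -/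
def SigmaMaxitive [MeasurableSpace E] (ν : Set E → ℝ≥0∞) : Prop :=
  Maxitive ν ∧ ∀ B : ℕ → Set E, (∀ n, MeasurableSet (B n)) → Monotone B →
    ν (⋃ n, B n) = ⨆ n, ν (B n)

/-- `N` is `τ`-negligible: it is contained in a measurable set of `τ`-measure zero. -/
def Negligible [MeasurableSpace E] (τ : Set E → ℝ≥0∞) (N : Set E) : Prop :=
  ∃ B : Set E, MeasurableSet B ∧ N ⊆ B ∧ τ B = 0

/-- The `τ`-essential supremum of `f` over `B`: `inf { t > 0 : B ∩ {f > t} is τ-negligible }`. -/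
noncomputable def essSupOn [MeasurableSpace E] (τ : Set E → ℝ≥0∞) (f : E → ℝ≥0∞)
    (B : Set E) : ℝ≥0∞ :=
  sInf {t : ℝ≥0∞ | 0 < t ∧ Negligible τ (B ∩ {x | t < f x})}

/-- `ν ≪ τ`: absolute continuity. -/
def AbsCont [MeasurableSpace E] (ν τ : Set E → ℝ≥0∞) : Prop :=
  ∀ B : Set E, MeasurableSet B → τ B = 0 → ν B = 0

/-- `ν ⋘ τ`: strong absolute continuity, i.e. `ν` has a measurable relative density
with respect to `τ`. -/
def StrongAbsCont [MeasurableSpace E] (ν τ : Set E → ℝ≥0∞) : Prop :=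
  ∃ f : E → ℝ≥0∞, Premeasurable f ∧ ∀ B : Set E, MeasurableSet B → ν B = essSupOn τ f B

/-- `c` is a cardinal density of `ν`: `ν B = sup_{x ∈ B} c x` for every measurable `B`. -/
def IsCardinalDensity [MeasurableSpace E] (ν : Set E → ℝ≥0∞) (c : E → ℝ≥0∞) : Prop :=
  ∀ B : Set E, MeasurableSet B → ν B = ⨆ x ∈ B, c x

/-- `τ` is essential: there exists a σ-finite σ-additive measure `m` with the same
null measurable sets. -/
def Essential [MeasurableSpace E] (τ : Set E → ℝ≥0∞) : Prop :=
  ∃ m : Measure E, SigmaFinite m ∧ ∀ B : Set E, MeasurableSet B → (0 < τ B ↔ 0 < m B)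

/-- A σ-ideal of the σ-algebra of measurable sets. -/
def SigmaIdeal [MeasurableSpace E] (I : Set (Set E)) : Prop :=
  I.Nonempty ∧ (∀ S ∈ I, MeasurableSet S) ∧
  (∀ f : ℕ → Set E, (∀ n, f n ∈ I) → (⋃ n, f n) ∈ I) ∧
  (∀ B S : Set E, MeasurableSet B → S ∈ I → B ⊆ S → B ∈ I)

/-- `τ` is σ-principal: every σ-ideal has a greatest element modulo `τ`-negligible sets. -/
def SigmaPrincipal [MeasurableSpace E] (τ : Set E → ℝ≥0∞) : Prop :=
  ∀ I : Set (Set E), SigmaIdeal I → ∃ L ∈ I, ∀ S ∈ I, Negligible τ (S \ L)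

/-- A pseudo-multiplication on `[0,∞]`. -/
structure PseudoMul where
  op : ℝ≥0∞ → ℝ≥0∞ → ℝ≥0∞
  assoc : ∀ a b c, op (op a b) c = op a (op b c)
  contOn : ContinuousOn (fun q : ℝ≥0∞ × ℝ≥0∞ => op q.1 q.2) (Set.Ioo 0 ⊤ ×ˢ Set.univ)
  contLeft : ∀ t, ContinuousOn (fun s => op s t) (Set.Ioi 0)
  monoLeft : ∀ t, Monotone fun s => op s t
  monoRight : ∀ s, Monotone (op s)
  one : ℝ≥0∞
  one_op : ∀ t, op one t = t
  eq_zero : ∀ s t, op s t = 0 → s = 0 ∨ t = 0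
  zero_op : ∀ t, op 0 t = 0
  op_zero : ∀ t, op t 0 = 0

/-- `t` is `⊙`-finite: `inf_{s > 0} s ⊙ t = 0`. -/
def OdotFinite (p : PseudoMul) (t : ℝ≥0∞) : Prop :=
  (⨅ s ∈ Set.Ioi (0 : ℝ≥0∞), p.op s t) = 0

/-- The idempotent `⊙`-integral `∫_B f ⊙ dτ = sup_{t ∈ [0,∞)} t ⊙ τ (B ∩ {f > t})`. -/
noncomputable def iInt [MeasurableSpace E] (p : PseudoMul) (τ : Set E → ℝ≥0∞)
    (f : E → ℝ≥0∞) (B : Set E) : ℝ≥0∞ :=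
  ⨆ t ∈ Set.Iio (⊤ : ℝ≥0∞), p.op t (τ (B ∩ {x | t < f x}))

/-- `ν ≪_⊙ τ`: `ν B ≤ ∞ ⊙ τ B` for every measurable `B`. -/
def OdotAbsCont [MeasurableSpace E] (p : PseudoMul) (ν τ : Set E → ℝ≥0∞) : Prop :=
  ∀ B : Set E, MeasurableSet B → ν B ≤ p.op ⊤ (τ B)

/-- `ν` is semi-`⊙`-finite. -/
def SemiOdotFinite [MeasurableSpace E] (p : PseudoMul) (ν : Set E → ℝ≥0∞) : Prop :=
  ∀ B : Set E, MeasurableSet B →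
    ν B = ⨆ A ∈ {A : Set E | MeasurableSet A ∧ A ⊆ B ∧ OdotFinite p (ν A)}, ν A

/-- `τ` is σ-`⊙`-finite. -/
def SigmaOdotFinite [MeasurableSpace E] (p : PseudoMul) (τ : Set E → ℝ≥0∞) : Prop :=
  ∃ B : ℕ → Set E, (∀ n, MeasurableSet (B n)) ∧ (⋃ n, B n) = Set.univ ∧
    ∀ n, OdotFinite p (τ (B n))

/-- Continuity from below. -/
def ContFromBelow [MeasurableSpace E] (ν : Set E → ℝ≥0∞) : Prop :=
  ∀ B : ℕ → Set E, (∀ n, MeasurableSet (B n)) → Monotone B →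
    Tendsto (fun n => ν (B n)) atTop (nhds (ν (⋃ n, B n)))

/-- Continuity from above (no finiteness assumption). -/
def ContFromAbove [MeasurableSpace E] (ν : Set E → ℝ≥0∞) : Prop :=
  ∀ B : ℕ → Set E, (∀ n, MeasurableSet (B n)) → Antitone B →
    Tendsto (fun n => ν (B n)) atTop (nhds (ν (⋂ n, B n)))

/-- An optimal measure: a maxitive measure continuous from below and from above. -/
def Optimal [MeasurableSpace E] (ν : Set E → ℝ≥0∞) : Prop :=
  Maxitive ν ∧ ContFromBelow ν ∧ ContFromAbove ν

/-- A maxitive measure with a measurable cardinal density is strongly absolutely continuous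
with respect to every maxitive measure dominating it; in particular it is autocontinuous. -/
theorem maxitive_cardinalDensity_absCont_iff_strongAbsCont
    [MeasurableSpace E] (ν : Set E → ℝ≥0∞) (hν : Maxitive ν)
    (c : E → ℝ≥0∞) (hc : Premeasurable c) (hcd : IsCardinalDensity ν c) :
    (∀ τ : Set E → ℝ≥0∞, Maxitive τ → (AbsCont ν τ ↔ StrongAbsCont ν τ)) ∧
    StrongAbsCont ν ν := by
  have hmono : ∀ A C : Set E, MeasurableSet A → MeasurableSet C → A ⊆ C → ν A ≤ ν C := by
    intro A C hA hC hsub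
    have := hν.2 A C hA hC
    rw [Set.union_eq_self_of_subset_left hsub] at this
    rw [this]; exact le_max_left _ _
  have main : ∀ τ : Set E → ℝ≥0∞, Maxitive τ → (AbsCont ν τ ↔ StrongAbsCont ν τ) := by
    intro τ hτ
    constructor
    · intro hac
      refine ⟨c, hc, fun B hB => ?_⟩
      apply le_antisymm
      · -- ν B ≤ essSupOn
        apply le_sInf
        rintro t ⟨ht0, A, hA, hsub, hτA⟩
        have hνA : ν A = 0 := hac A hA hτA
        have hBt : MeasurableSet (B ∩ {x | t < c x}) := hB.inter (hc t)
        have h1 : ν (B ∩ {x | t < c x}) = 0 :=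
          le_antisymm (hνA ▸ hmono _ A hBt hA hsub) (zero_le)
        rw [hcd _ hBt] at h1
        rw [hcd B hB]
        refine iSup₂_le fun x hx => ?_
        by_contra h
        push_neg at h
        have hx2 : x ∈ B ∩ {x | t < c x} := ⟨hx, h⟩
        have : c x ≤ 0 := h1 ▸ le_iSup₂ (f := fun x _ => c x) x hx2
        exact (ht0.trans h).not_ge this
      · -- essSupOn ≤ ν B
        apply le_of_forall_gt_imp_ge_of_dense
        intro t ht
        apply sInf_le
        refine ⟨(zero_le).trans_lt ht, ∅, MeasurableSet.empty, ?_, hτ.1⟩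
        rintro x ⟨hxB, hxt⟩
        have : c x ≤ ν B := by
          rw [hcd B hB]; exact le_iSup₂ (f := fun x _ => c x) x hxB
        exact absurd (this.trans_lt ht) (not_lt.2 hxt.le)
    · rintro ⟨f, hf, hrd⟩ B hB hτB
      rw [hrd B hB]
      have h0 : (0 : ℝ≥0∞) ∈ lowerBounds {t : ℝ≥0∞ | 0 < t ∧ Negligible τ (B ∩ {x | t < f x})} :=
        fun t _ => zero_le
      refine le_antisymm ?_ (zero_le)
      apply le_of_forall_gt_imp_ge_of_dense
      intro t ht
      exact sInf_le ⟨ht, B, hB, Set.inter_subset_left, hτB⟩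
  refine ⟨main, ?_⟩
  exact (main ν hν).1 (fun B _ h => h)
end

section
/- (Barron–Cardaliaguet–Jensen) Let ν and τ be σ-maxitive measures on a σ-algebra 𝓑, and assume τ is essential. Then ν ≪ τ if and only if ν ⋘ τ; moreover, in this situation any two relative densities of ν with respect to τ agree τ-almost everywhere. -/
open scoped ENNReal
open Set Filter MeasureTheory

variable {E : Type*}

section Helpers
variable [MeasurableSpace E] {ν τ : Set E → ℝ≥0∞}

lemma Maxitive.mono (hν : Maxitive ν) {A B : Set E} (hA : MeasurableSet A)
    (hB : MeasurableSet B) (hAB : A ⊆ B) : ν A ≤ ν B := by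
  have h := hν.2 A B hA hB
  rw [Set.union_eq_self_of_subset_left hAB] at h
  rw [h]; exact le_max_left _ _

lemma SigmaMaxitive.iUnion_le {ι : Type*} [Countable ι] (hν : SigmaMaxitive ν)
    (B : ι → Set E) (hB : ∀ i, MeasurableSet (B i)) {t : ℝ≥0∞}
    (h : ∀ i, ν (B i) ≤ t) : ν (⋃ i, B i) ≤ t := by
  rcases isEmpty_or_nonempty ι with hι | hι
  · rw [Set.iUnion_of_empty]; rw [hν.1.1]; exact zero_le
  · obtain ⟨g, hg⟩ := exists_surjective_nat ι
    have hacc : ∀ n, MeasurableSet (Set.accumulate (B ∘ g) n) := by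
      intro n
      rw [Set.accumulate_def]
      exact MeasurableSet.biUnion (Set.to_countable _) fun k _ => hB (g k)
    have haccle : ∀ n, ν (Set.accumulate (B ∘ g) n) ≤ t := by
      intro n
      induction n with
      | zero => simpa [Set.accumulate_def] using h (g 0)
      | succ n ih =>
        have hstep : Set.accumulate (B ∘ g) (n+1)
            = Set.accumulate (B ∘ g) n ∪ (B ∘ g) (n+1) := by
          ext x
          simp only [Set.mem_accumulate, Set.mem_union, Nat.le_add_one_iff]
          constructor
          · rintro ⟨y, hy | rfl, hx⟩
            exacts [Or.inl ⟨y, hy, hx⟩, Or.inr hx]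
          · rintro (⟨y, hy, hx⟩ | hx)
            exacts [⟨y, Or.inl hy, hx⟩, ⟨n+1, Or.inr rfl, hx⟩]
        rw [hstep]
        exact (hν.1.2 _ _ (hacc n) (hB (g (n+1)))).le.trans (max_le ih (h _))
    have : ⋃ i, B i = ⋃ n, Set.accumulate (B ∘ g) n := by
      rw [Set.iUnion_accumulate]
      exact (hg.iUnion_comp B).symm
    rw [this, hν.2 _ hacc Set.monotone_accumulate]
    exact iSup_le haccle

lemma Negligible.mono' {N S : Set E} (h : Negligible τ S) (hNS : N ⊆ S) :
    Negligible τ N := by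
  obtain ⟨C, hC, hSC, hC0⟩ := h
  exact ⟨C, hC, hNS.trans hSC, hC0⟩

lemma Negligible.null (hτ : Maxitive τ) {N : Set E} (hN : MeasurableSet N)
    (h : Negligible τ N) : τ N = 0 := by
  obtain ⟨C, hC, hSC, hC0⟩ := h
  exact le_antisymm (hC0 ▸ hτ.mono hN hC hSC) (zero_le)

lemma SigmaMaxitive.negligible_iUnion {ι : Type*} [Countable ι] (hτ : SigmaMaxitive τ)
    (N : ι → Set E) (h : ∀ i, Negligible τ (N i)) : Negligible τ (⋃ i, N i) := by
  choose C hC hNC hC0 using h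
  refine ⟨⋃ i, C i, MeasurableSet.iUnion hC, Set.iUnion_mono hNC, ?_⟩
  exact le_antisymm (hτ.iUnion_le C hC fun i => (hC0 i).le) (zero_le)

/-- Exhaustion: a countable-union-closed family of measurable sets has a
greatest element modulo a finite measure. -/
lemma exists_greatest_mod (m : Measure E) [IsFiniteMeasure m] (I : Set (Set E))
    (hmeas : ∀ S ∈ I, MeasurableSet S) (hempty : ∅ ∈ I)
    (hunion : ∀ f : ℕ → Set E, (∀ n, f n ∈ I) → (⋃ n, f n) ∈ I) :
    ∃ L ∈ I, ∀ S ∈ I, m (S \ L) = 0 := by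
  set α := ⨆ S ∈ I, m S with hα
  have hαfin : α ≠ ∞ :=
    ne_top_of_le_ne_top (measure_ne_top m univ)
      (iSup₂_le fun S _ => measure_mono (Set.subset_univ S))
  have key : ∀ n : ℕ, ∃ S ∈ I, α ≤ m S + ((n : ℝ≥0∞) + 1)⁻¹ := by
    intro n
    set ε : ℝ≥0∞ := ((n : ℝ≥0∞) + 1)⁻¹ with hε
    have hε0 : ε ≠ 0 := by simp [hε]
    have hεtop : ε ≠ ∞ := by simp [hε]
    by_cases hc : α ≤ ε
    · exact ⟨∅, hempty, hc.trans le_add_self⟩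
    · push_neg at hc
      have h2 : α - ε < α := ENNReal.sub_lt_self hαfin ((lt_of_le_of_lt (zero_le : (0:ℝ≥0∞) ≤ ε) hc).ne') hε0
      rw [hα] at h2
      simp only [lt_iSup_iff] at h2
      obtain ⟨S, hS, hS2⟩ := h2
      refine ⟨S, hS, ?_⟩
      rw [ENNReal.sub_lt_iff_lt_right hεtop hc.le] at hS2
      exact hS2.le
  choose S hSI hSle using key
  refine ⟨⋃ n, S n, hunion S hSI, fun T hT => ?_⟩
  set L := ⋃ n, S n with hL
  have hLmeas : MeasurableSet L := MeasurableSet.iUnion fun n => hmeas _ (hSI n)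
  have hTL : T ∪ L ∈ I := by
    have := hunion (fun n => Nat.rec T (fun _ _ => L) n) (fun n => by
      cases n with
      | zero => exact hT
      | succ k => exact hunion S hSI)
    convert this using 1
    ext x
    simp only [Set.mem_union, Set.mem_iUnion]
    constructor
    · rintro (hx | hx)
      · exact ⟨0, hx⟩
      · exact ⟨1, hx⟩
    · rintro ⟨n, hx⟩
      cases n with
      | zero => exact Or.inl hx
      | succ k => exact Or.inr hx
  have hsplit : m L + m (T \ L) = m (T ∪ L) := by
    rw [show T ∪ L = L ∪ (T \ L) by rw [Set.union_diff_self]; exact Set.union_comm T L,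
      measure_union disjoint_sdiff_right ((hmeas T hT).diff hLmeas)]
  have hub : ∀ n : ℕ, m L + m (T \ L) ≤ m L + ((n : ℝ≥0∞) + 1)⁻¹ := by
    intro n
    rw [hsplit]
    have h1 : m (T ∪ L) ≤ α := by
      rw [hα]; exact le_biSup (fun S : Set E => m S) hTL
    have h2 : m (S n) ≤ m L := measure_mono (Set.subset_iUnion S n)
    exact h1.trans ((hSle n).trans (by gcongr))
  have hfin : m L ≠ ∞ := measure_ne_top m L
  have hle : ∀ n : ℕ, m (T \ L) ≤ ((n : ℝ≥0∞) + 1)⁻¹ := fun n =>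
    (ENNReal.add_le_add_iff_left hfin).1 (hub n)
  by_contra h0
  obtain ⟨n, hn⟩ := ENNReal.exists_inv_nat_lt h0
  have : m (T \ L) ≤ (n : ℝ≥0∞)⁻¹ :=
    (hle n).trans (ENNReal.inv_le_inv.2 le_self_add)
  exact absurd (this.trans_lt hn) (lt_irrefl _)

end Helpers

section Main
variable [MeasurableSpace E] {ν τ : Set E → ℝ≥0∞}

lemma strong_to_absCont (hτ : SigmaMaxitive τ) (h : StrongAbsCont ν τ) :
    AbsCont ν τ := by
  obtain ⟨f, hf, hνf⟩ := h
  intro B hB hτB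
  rw [hνf B hB]
  apply le_antisymm _ (zero_le)
  apply le_of_forall_gt_imp_ge_of_dense
  intro t ht
  exact sInf_le ⟨ht, B, hB, Set.inter_subset_left, hτB⟩

lemma absCont_to_strong (hν : SigmaMaxitive ν) (hτ : SigmaMaxitive τ)
    (hess : Essential τ) (hac : AbsCont ν τ) : StrongAbsCont ν τ := by
  classical
  obtain ⟨m, hmσ, hm⟩ := hess
  haveI := hmσ
  obtain ⟨μ, hμfin, hmμ, hμm⟩ := MeasureTheory.exists_isFiniteMeasure_absolutelyContinuous m
  haveI := hμfin
  have hnull : ∀ B : Set E, MeasurableSet B → (τ B = 0 ↔ μ B = 0) := by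
    intro B hB
    constructor
    · intro h
      by_contra hμB
      have h1 : 0 < μ B := pos_iff_ne_zero.2 hμB
      have h2 : 0 < m B := pos_iff_ne_zero.2 fun hm0 => hμB (hμm hm0)
      have := (hm B hB).2 h2
      simp [h] at this
    · intro h
      by_contra hτB
      have h1 : 0 < τ B := pos_iff_ne_zero.2 hτB
      have h2 : 0 < m B := (hm B hB).1 h1
      exact absurd (hmμ h) h2.ne'
  set c : ℚ → ℝ≥0∞ := fun q => (Real.toNNReal q : ℝ≥0∞) with hcdef
  have hI : ∀ q : ℚ, ∃ L, (MeasurableSet L ∧ ν L ≤ c q) ∧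
      ∀ S, MeasurableSet S ∧ ν S ≤ c q → μ (S \ L) = 0 := by
    intro q
    obtain ⟨L, hL, hLmax⟩ := exists_greatest_mod μ {B | MeasurableSet B ∧ ν B ≤ c q}
      (fun S hS => hS.1) ⟨MeasurableSet.empty, by rw [hν.1.1]; exact zero_le⟩
      (fun f hf => ⟨MeasurableSet.iUnion fun n => (hf n).1,
        hν.iUnion_le f (fun n => (hf n).1) fun n => (hf n).2⟩)
    exact ⟨L, hL, hLmax⟩
  choose L hLmem hLmax using hI
  have hLmeas : ∀ q, MeasurableSet (L q) := fun q => (hLmem q).1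
  have hLν : ∀ q, ν (L q) ≤ c q := fun q => (hLmem q).2
  set f : E → ℝ≥0∞ := fun x => ⨅ (q : ℚ) (_ : x ∈ L q), c q with hfdef
  have hfle : ∀ q x, x ∈ L q → f x ≤ c q := fun q x hx => iInf₂_le q hx
  have hsub : ∀ t : ℝ≥0∞, {x | f x ≤ t} =
      ⋂ (q : ℚ) (_ : t < c q), ⋃ (p : ℚ) (_ : c p < c q), L p := by
    intro t
    ext x
    simp only [Set.mem_setOf_eq, Set.mem_iInter, Set.mem_iUnion]
    constructor
    · intro hx q hq
      have hlt : f x < c q := lt_of_le_of_lt hx hq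
      rw [hfdef] at hlt
      simp only [iInf_lt_iff] at hlt
      obtain ⟨p, hp1, hp2⟩ := hlt
      exact ⟨p, hp2, hp1⟩
    · intro hx
      by_contra h
      push_neg at h
      obtain ⟨q, _, hq1, hq2⟩ := ENNReal.lt_iff_exists_rat_btwn.1 h
      obtain ⟨p, hpq, hxp⟩ := hx q hq1
      exact absurd (lt_of_le_of_lt (hfle p x hxp) hpq) (not_lt.2 hq2.le)
  have hfmeas : Premeasurable f := by
    intro t
    have h1 : {x | t < f x} = {x | f x ≤ t}ᶜ := by
      ext x; simp only [Set.mem_compl_iff, Set.mem_setOf_eq, not_le]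
    rw [h1, hsub]
    exact (MeasurableSet.iInter fun q => MeasurableSet.iInter fun _ =>
      MeasurableSet.iUnion fun p => MeasurableSet.iUnion fun _ => hLmeas p).compl
  refine ⟨f, hfmeas, fun B hB => ?_⟩
  apply le_antisymm
  · apply le_sInf
    rintro t ⟨ht0, N, hNmeas, hsubN, hN0⟩
    have hgt : MeasurableSet {x | t < f x} := hfmeas t
    have hle : MeasurableSet {x | f x ≤ t} := by
      have h1 : {x | f x ≤ t} = {x | t < f x}ᶜ := by
        ext x; simp only [Set.mem_compl_iff, Set.mem_setOf_eq, not_lt]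
      rw [h1]; exact hgt.compl
    have hB1 : MeasurableSet (B ∩ {x | t < f x}) := hB.inter hgt
    have hB2 : MeasurableSet (B ∩ {x | f x ≤ t}) := hB.inter hle
    have hBsplit : B = (B ∩ {x | t < f x}) ∪ (B ∩ {x | f x ≤ t}) := by
      have huniv : {x : E | t < f x} ∪ {x | f x ≤ t} = Set.univ := by
        ext x
        simp only [Set.mem_union, Set.mem_setOf_eq, Set.mem_univ, iff_true]
        exact lt_or_ge _ _
      rw [← Set.inter_union_distrib_left, huniv, Set.inter_univ]
    nth_rewrite 1 [hBsplit]
    rw [hν.1.2 _ _ hB1 hB2]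
    apply max_le
    · have h1 : ν (B ∩ {x | t < f x}) ≤ ν N := hν.1.mono hB1 hNmeas hsubN
      rw [hac N hNmeas hN0] at h1
      exact h1.trans (zero_le : (0:ℝ≥0∞) ≤ t)
    · apply le_of_forall_gt_imp_ge_of_dense
      intro r hr
      obtain ⟨q, _, hq1, hq2⟩ := ENNReal.lt_iff_exists_rat_btwn.1 hr
      have hsubU : B ∩ {x | f x ≤ t} ⊆ ⋃ (p : {p : ℚ // c p < c q}), L p.1 := by
        rintro x ⟨-, hx⟩
        have hx2 : x ∈ ⋂ (q' : ℚ) (_ : t < c q'), ⋃ (p : ℚ) (_ : c p < c q'), L p := by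
          rw [← hsub t]; exact hx
        simp only [Set.mem_iInter, Set.mem_iUnion] at hx2
        obtain ⟨p, hp1, hp2⟩ := hx2 q hq1
        exact Set.mem_iUnion.2 ⟨⟨p, hp1⟩, hp2⟩
      have hU : ν (⋃ (p : {p : ℚ // c p < c q}), L p.1) ≤ c q :=
        hν.iUnion_le (fun p : {p : ℚ // c p < c q} => L p.1) (fun p => hLmeas p.1)
          fun p => (hLν p.1).trans p.2.le
      have h2 := hν.1.mono hB2
        (MeasurableSet.iUnion fun p : {p : ℚ // c p < c q} => hLmeas p.1) hsubU
      exact (h2.trans hU).trans hq2.le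
  · apply le_of_forall_gt_imp_ge_of_dense
    intro t ht
    obtain ⟨q, _, hq1, hq2⟩ := ENNReal.lt_iff_exists_rat_btwn.1 ht
    apply sInf_le
    refine ⟨lt_of_le_of_lt (zero_le) ht, B \ L q, hB.diff (hLmeas q), ?_, ?_⟩
    · rintro x ⟨hxB, hxf⟩
      refine ⟨hxB, fun hxL => ?_⟩
      exact absurd hxf (not_lt.2 ((hfle q x hxL).trans hq2.le))
    · exact (hnull _ (hB.diff (hLmeas q))).2 (hLmax q B ⟨hB, hq1.le⟩)

lemma density_unique (hτ : SigmaMaxitive τ) (f g : E → ℝ≥0∞)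
    (hf : Premeasurable f) (hg : Premeasurable g)
    (hνf : ∀ B : Set E, MeasurableSet B → ν B = essSupOn τ f B)
    (hνg : ∀ B : Set E, MeasurableSet B → ν B = essSupOn τ g B) :
    Negligible τ {x | f x ≠ g x} := by
  classical
  have key : ∀ (u v : E → ℝ≥0∞), Premeasurable u → Premeasurable v →
      (∀ B : Set E, MeasurableSet B → ν B = essSupOn τ u B) →
      (∀ B : Set E, MeasurableSet B → ν B = essSupOn τ v B) →
      ∀ a b : ℝ≥0∞, a < b → τ ({x | u x ≤ a} ∩ {x | b < v x}) = 0 := by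
    intro u v hu hv hνu hνv a b hab
    set A := {x | u x ≤ a} ∩ {x | b < v x} with hAdef
    have hulev : MeasurableSet {x | u x ≤ a} := by
      have h1 : {x | u x ≤ a} = {x | a < u x}ᶜ := by
        ext x; simp only [Set.mem_compl_iff, Set.mem_setOf_eq, not_lt]
      rw [h1]; exact (hu a).compl
    have hAmeas : MeasurableSet A := hulev.inter (hv b)
    by_contra hA0
    have h1 : ν A ≤ a := by
      rw [hνu A hAmeas]
      apply le_of_forall_gt_imp_ge_of_dense
      intro r hr
      apply sInf_le
      refine ⟨lt_of_le_of_lt (zero_le : (0:ℝ≥0∞) ≤ a) hr, ∅, MeasurableSet.empty, ?_, hτ.1.1⟩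
      rintro x ⟨⟨hx1, -⟩, hx2⟩
      exact absurd hx2 (not_lt.2 (hx1.trans hr.le))
    have h2 : b ≤ ν A := by
      rw [hνv A hAmeas]
      apply le_sInf
      rintro r ⟨hr0, N, hNmeas, hsubN, hN0⟩
      by_contra hrb
      push_neg at hrb
      have hAsub : A ⊆ N := fun x hx => hsubN ⟨hx, hrb.trans hx.2⟩
      exact hA0 (le_antisymm (hN0 ▸ hτ.1.mono hAmeas hNmeas hAsub) (zero_le))
    exact absurd (hab.trans_le (h2.trans h1)) (lt_irrefl a)
  set c : ℚ → ℝ≥0∞ := fun q => (Real.toNNReal q : ℝ≥0∞) with hcdef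
  have hulev : ∀ (u : E → ℝ≥0∞), Premeasurable u → ∀ a : ℝ≥0∞,
      MeasurableSet {x | u x ≤ a} := by
    intro u hu a
    have h1 : {x | u x ≤ a} = {x | a < u x}ᶜ := by
      ext x; simp only [Set.mem_compl_iff, Set.mem_setOf_eq, not_lt]
    rw [h1]; exact (hu a).compl
  set N : ℚ × ℚ → Set E := fun p =>
    if c p.1 < c p.2 then
      ({x | f x ≤ c p.1} ∩ {x | c p.2 < g x}) ∪ ({x | g x ≤ c p.1} ∩ {x | c p.2 < f x})
    else ∅ with hNdef
  have hNneg : ∀ p, Negligible τ (N p) := by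
    intro p
    rw [hNdef]
    by_cases h : c p.1 < c p.2
    · simp only [if_pos h]
      have m1 : MeasurableSet ({x | f x ≤ c p.1} ∩ {x | c p.2 < g x}) :=
        (hulev f hf _).inter (hg _)
      have m2 : MeasurableSet ({x | g x ≤ c p.1} ∩ {x | c p.2 < f x}) :=
        (hulev g hg _).inter (hf _)
      refine ⟨_, m1.union m2, Set.Subset.refl _, ?_⟩
      rw [hτ.1.2 _ _ m1 m2, key f g hf hg hνf hνg _ _ h, key g f hg hf hνg hνf _ _ h]
      simp
    · simp only [if_neg h]
      exact ⟨∅, MeasurableSet.empty, Set.Subset.refl _, hτ.1.1⟩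
  have hNU : Negligible τ (⋃ p, N p) := hτ.negligible_iUnion N hNneg
  apply hNU.mono'
  intro x hx
  simp only [Set.mem_setOf_eq] at hx
  rcases lt_or_gt_of_ne hx with hlt | hlt
  · obtain ⟨s, _, hs1, hs2⟩ := ENNReal.lt_iff_exists_rat_btwn.1 hlt
    obtain ⟨t, _, ht1, ht2⟩ := ENNReal.lt_iff_exists_rat_btwn.1 hs2
    refine Set.mem_iUnion.2 ⟨(s, t), ?_⟩
    rw [hNdef]
    simp only [if_pos ht1]
    rw [if_pos (show c s < c t from ht1)]
    exact Set.mem_union_left _ (show x ∈ {x | f x ≤ c s} ∩ {x | c t < g x} from ⟨hs1.le, ht2⟩)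
  · obtain ⟨s, _, hs1, hs2⟩ := ENNReal.lt_iff_exists_rat_btwn.1 hlt
    obtain ⟨t, _, ht1, ht2⟩ := ENNReal.lt_iff_exists_rat_btwn.1 hs2
    refine Set.mem_iUnion.2 ⟨(s, t), ?_⟩
    rw [hNdef]
    simp only [if_pos ht1]
    rw [if_pos (show c s < c t from ht1)]
    exact Set.mem_union_right _ (show x ∈ {x | g x ≤ c s} ∩ {x | c t < f x} from ⟨hs1.le, ht2⟩)

end Main

/-- (Barron–Cardaliaguet–Jensen) If `τ` is an essential σ-maxitive measure, then `ν ≪ τ`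
iff `ν ⋘ τ`, and any two relative densities agree `τ`-almost everywhere. -/
theorem barron_cardaliaguet_jensen [MeasurableSpace E] (ν τ : Set E → ℝ≥0∞)
    (hν : SigmaMaxitive ν) (hτ : SigmaMaxitive τ) (hess : Essential τ) :
    (AbsCont ν τ ↔ StrongAbsCont ν τ) ∧
    (∀ f g : E → ℝ≥0∞, Premeasurable f → Premeasurable g →
      (∀ B : Set E, MeasurableSet B → ν B = essSupOn τ f B) →
      (∀ B : Set E, MeasurableSet B → ν B = essSupOn τ g B) →
      Negligible τ {x | f x ≠ g x}) := by
  refine ⟨⟨fun h => absCont_to_strong hν hτ hess h, fun h => strong_to_absCont hτ h⟩,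
    fun f g hf hg h1 h2 => density_unique hτ f g hf hg h1 h2⟩
end

section
/- Let ν be an essential σ-maxitive measure on a σ-algebra 𝓑. Then ν is autocontinuous (ν ⋘ ν). Moreover, if the empty set is the only ν-negligible subset of E, then ν has a 𝓑-measurable cardinal density, i.e. there is a 𝓑-measurable c : E → [0,∞] with ν(B) = sup_{x∈B} c(x) for all B ∈ 𝓑. -/
open scoped ENNReal
open Set Filter MeasureTheory

variable {E : Type*}

section PoncetAux

variable [MeasurableSpace E] {ν : Set E → ℝ≥0∞}

private lemma maxitive_mono' (hν : Maxitive ν) {A B : Set E} (hA : MeasurableSet A)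
    (hB : MeasurableSet B) (h : A ⊆ B) : ν A ≤ ν B := by
  have hAB := hν.2 A B hA hB
  rw [Set.union_eq_self_of_subset_left h] at hAB
  rw [hAB]; exact le_max_left _ _

private lemma sigmaMaxitive_iUnion_le' {ι : Type*} [Countable ι] (hν : SigmaMaxitive ν)
    (A : ι → Set E) (hA : ∀ i, MeasurableSet (A i)) :
    ν (⋃ i, A i) ≤ ⨆ i, ν (A i) := by
  cases isEmpty_or_nonempty ι with
  | inl h =>
    simp only [iUnion_of_empty]
    simp [hν.1.1]
  | inr h =>
    obtain ⟨g, hg⟩ := exists_surjective_nat ι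
    let C : ℕ → Set E := fun n => Nat.rec (A (g 0)) (fun n Cn => Cn ∪ A (g (n + 1))) n
    have hCsucc : ∀ n, C (n + 1) = C n ∪ A (g (n + 1)) := fun n => rfl
    have hCmeas : ∀ n, MeasurableSet (C n) := by
      intro n
      induction n with
      | zero => exact hA (g 0)
      | succ n ih => rw [hCsucc]; exact ih.union (hA _)
    have hCmono : Monotone C :=
      monotone_nat_of_le_succ fun n => by rw [hCsucc]; exact subset_union_left
    have hCle : ∀ n, ν (C n) ≤ ⨆ i, ν (A i) := by
      intro n
      induction n with
      | zero => exact le_iSup (fun i => ν (A i)) (g 0)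
      | succ n ih =>
        rw [hCsucc, hν.1.2 _ _ (hCmeas n) (hA _)]
        exact max_le ih (le_iSup (fun i => ν (A i)) (g (n + 1)))
    have hCU : ⋃ n, C n = ⋃ i, A i := by
      apply subset_antisymm
      · refine iUnion_subset fun n => ?_
        induction n with
        | zero => exact subset_iUnion A (g 0)
        | succ n ih => rw [hCsucc]; exact union_subset ih (subset_iUnion A (g (n + 1)))
      · refine iUnion_subset fun i => ?_
        obtain ⟨n, rfl⟩ := hg i
        have : A (g n) ⊆ C n := by
          cases n with
          | zero => exact subset_rfl
          | succ n => rw [hCsucc]; exact subset_union_right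
        exact this.trans (subset_iUnion C n)
    calc ν (⋃ i, A i) = ν (⋃ n, C n) := by rw [hCU]
      _ = ⨆ n, ν (C n) := hν.2 C hCmeas hCmono
      _ ≤ ⨆ i, ν (A i) := iSup_le hCle

private lemma negligible_mono' {N N' : Set E} (h : N ⊆ N') (hN' : Negligible ν N') :
    Negligible ν N := by
  obtain ⟨B, hB, hsub, hB0⟩ := hN'
  exact ⟨B, hB, h.trans hsub, hB0⟩

private lemma meas_eq_zero_of_negligible' (hν : Maxitive ν) {A : Set E}
    (hA : MeasurableSet A) (h : Negligible ν A) : ν A = 0 := by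
  obtain ⟨B, hB, hsub, hB0⟩ := h
  exact le_antisymm (hB0 ▸ maxitive_mono' hν hA hB hsub) (zero_le)

/-- Every "ideal" `{B : MeasurableSet B ∧ ν B ≤ q}` of an essential σ-maxitive measure
has a greatest element modulo negligible sets. -/
private lemma exists_maximal' (hν : SigmaMaxitive ν) (hess : Essential ν) (q : ℝ≥0∞) :
    ∃ L : Set E, MeasurableSet L ∧ ν L ≤ q ∧
      ∀ B : Set E, MeasurableSet B → ν B ≤ q → Negligible ν (B \ L) := by
  classical
  obtain ⟨m, hmσ, hm⟩ := hess
  haveI := hmσ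
  obtain ⟨μ, hμfin, hmμ, hμm⟩ := exists_isFiniteMeasure_absolutelyContinuous m
  haveI := hμfin
  have hzero : ∀ B : Set E, MeasurableSet B → (ν B = 0 ↔ μ B = 0) := by
    intro B hB
    have h1 : ν B = 0 ↔ m B = 0 := by
      constructor
      · intro h
        by_contra h'
        exact absurd ((hm B hB).2 (pos_iff_ne_zero.2 h')) (by simp [h])
      · intro h
        by_contra h'
        exact absurd ((hm B hB).1 (pos_iff_ne_zero.2 h')) (by simp [h])
    exact h1.trans ⟨fun h => hμm h, fun h => hmμ h⟩
  haveI : Nonempty {B : Set E // MeasurableSet B ∧ ν B ≤ q} :=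
    ⟨⟨∅, MeasurableSet.empty, by rw [hν.1.1]; exact zero_le⟩⟩
  have hαfin : (⨆ C : {B : Set E // MeasurableSet B ∧ ν B ≤ q}, μ C.1) ≠ ⊤ :=
    ne_top_of_le_ne_top (measure_ne_top μ univ)
      (iSup_le fun C => measure_mono (subset_univ _))
  have key : ∀ n : ℕ, ∃ B : {B : Set E // MeasurableSet B ∧ ν B ≤ q},
      (⨆ C : {B : Set E // MeasurableSet B ∧ ν B ≤ q}, μ C.1) ≤
        μ B.1 + ((n : ℝ≥0∞) + 1)⁻¹ := by
    intro n
    by_cases hα0 : (⨆ C : {B : Set E // MeasurableSet B ∧ ν B ≤ q}, μ C.1) = 0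
    · exact ⟨Classical.arbitrary _, by rw [hα0]; exact zero_le⟩
    · have hεne : ((n : ℝ≥0∞) + 1)⁻¹ ≠ 0 := by
        rw [ENNReal.inv_ne_zero]
        exact (ENNReal.add_lt_top.2 ⟨ENNReal.natCast_lt_top n, ENNReal.one_lt_top⟩).ne
      have hlt := ENNReal.sub_lt_self hαfin hα0 hεne
      obtain ⟨B, hB⟩ := lt_iSup_iff.1 hlt
      exact ⟨B, tsub_le_iff_right.1 hB.le⟩
  choose Bs hBs using key
  have hinv0 : (⨅ n : ℕ, ((n : ℝ≥0∞) + 1)⁻¹) = 0 := by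
    refine le_antisymm ?_ (zero_le)
    by_contra h
    push_neg at h
    obtain ⟨n, hn⟩ := ENNReal.exists_inv_nat_lt (pos_iff_ne_zero.1 h)
    have h1 : (⨅ n : ℕ, ((n : ℝ≥0∞) + 1)⁻¹) ≤ ((n : ℝ≥0∞) + 1)⁻¹ := iInf_le _ n
    have h2 : ((n : ℝ≥0∞) + 1)⁻¹ ≤ ((n : ℝ≥0∞))⁻¹ :=
      ENNReal.inv_le_inv.2 le_self_add
    exact absurd (h1.trans h2) (not_le.2 hn)
  refine ⟨⋃ n, (Bs n).1, MeasurableSet.iUnion fun n => (Bs n).2.1, ?_, ?_⟩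
  · exact (sigmaMaxitive_iUnion_le' hν _ fun n => (Bs n).2.1).trans
      (iSup_le fun n => (Bs n).2.2)
  · intro S hS hSq
    have hLmeas : MeasurableSet (⋃ n, (Bs n).1) :=
      MeasurableSet.iUnion fun n => (Bs n).2.1
    have hLν : ν (⋃ n, (Bs n).1) ≤ q :=
      (sigmaMaxitive_iUnion_le' hν _ fun n => (Bs n).2.1).trans
        (iSup_le fun n => (Bs n).2.2)
    have hμL : (⨆ C : {B : Set E // MeasurableSet B ∧ ν B ≤ q}, μ C.1)
        ≤ μ (⋃ n, (Bs n).1) := by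
      have h1 : ∀ n : ℕ, (⨆ C : {B : Set E // MeasurableSet B ∧ ν B ≤ q}, μ C.1)
          ≤ μ (⋃ n, (Bs n).1) + ((n : ℝ≥0∞) + 1)⁻¹ := fun n =>
        (hBs n).trans (add_le_add
          (measure_mono (subset_iUnion (fun n => (Bs n).1) n)) le_rfl)
      calc (⨆ C : {B : Set E // MeasurableSet B ∧ ν B ≤ q}, μ C.1)
          ≤ ⨅ n : ℕ, (μ (⋃ n, (Bs n).1) + ((n : ℝ≥0∞) + 1)⁻¹) := le_iInf h1
        _ = μ (⋃ n, (Bs n).1) + ⨅ n : ℕ, ((n : ℝ≥0∞) + 1)⁻¹ := ENNReal.add_iInf.symm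
        _ = μ (⋃ n, (Bs n).1) := by rw [hinv0, add_zero]
    have hmem : MeasurableSet (S ∪ ⋃ n, (Bs n).1) ∧ ν (S ∪ ⋃ n, (Bs n).1) ≤ q :=
      ⟨hS.union hLmeas, by rw [hν.1.2 _ _ hS hLmeas]; exact max_le hSq hLν⟩
    have h1 : μ (S ∪ ⋃ n, (Bs n).1)
        ≤ ⨆ C : {B : Set E // MeasurableSet B ∧ ν B ≤ q}, μ C.1 :=
      le_iSup (fun C : {B : Set E // MeasurableSet B ∧ ν B ≤ q} => μ C.1)
        ⟨S ∪ ⋃ n, (Bs n).1, hmem⟩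
    have h2 : μ (⋃ n, (Bs n).1) + μ (S \ ⋃ n, (Bs n).1)
        ≤ μ (⋃ n, (Bs n).1) + 0 := by
      rw [add_zero]
      calc μ (⋃ n, (Bs n).1) + μ (S \ ⋃ n, (Bs n).1)
          = μ ((⋃ n, (Bs n).1) ∪ (S \ ⋃ n, (Bs n).1)) :=
            (measure_union disjoint_sdiff_right (hS.diff hLmeas)).symm
        _ = μ (S ∪ ⋃ n, (Bs n).1) := by rw [union_diff_self, union_comm]
        _ ≤ ⨆ C : {B : Set E // MeasurableSet B ∧ ν B ≤ q}, μ C.1 := h1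
        _ ≤ μ (⋃ n, (Bs n).1) := hμL
    have h3 : μ (S \ ⋃ n, (Bs n).1) = 0 :=
      le_antisymm ((ENNReal.add_le_add_iff_left (measure_ne_top μ _)).1 h2) (zero_le)
    exact ⟨S \ ⋃ n, (Bs n).1, hS.diff hLmeas, subset_rfl,
      (hzero _ (hS.diff hLmeas)).2 h3⟩

end PoncetAux

/-- An essential σ-maxitive measure is autocontinuous; if moreover the empty set is its only
negligible subset, it has a measurable cardinal density. -/

theorem essential_autocontinuous_and_cardinalDensity [MeasurableSpace E]
    (ν : Set E → ℝ≥0∞) (hν : SigmaMaxitive ν) (hess : Essential ν) :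
    StrongAbsCont ν ν ∧
    ((∀ N : Set E, Negligible ν N → N = ∅) →
      ∃ c : E → ℝ≥0∞, Premeasurable c ∧ IsCardinalDensity ν c) := by
  classical
  have hmax : Maxitive ν := hν.1
  set cq : ℚ → ℝ≥0∞ := fun q => (Real.toNNReal q : ℝ≥0∞) with hcq
  choose L hLmeas hLle hLmax using fun q : ℚ =>
    exists_maximal' hν hess (cq q)
  set f : E → ℝ≥0∞ := fun x => ⨅ q : ℚ, if x ∈ L q then cq q else ⊤ with hfdef
  have hF1 : ∀ (q : ℚ) (x : E), x ∈ L q → f x ≤ cq q := by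
    intro q x hx
    calc f x ≤ (if x ∈ L q then cq q else ⊤) := iInf_le _ q
      _ = cq q := if_pos hx
  have hF2 : ∀ (t : ℝ≥0∞) (x : E), t ≤ f x ↔ ∀ q : ℚ, x ∈ L q → t ≤ cq q := by
    intro t x
    rw [hfdef]
    simp only [le_iInf_iff]
    constructor
    · intro h q hx
      have := h q
      rwa [if_pos hx] at this
    · intro h q
      by_cases hx : x ∈ L q
      · rw [if_pos hx]; exact h q hx
      · rw [if_neg hx]; exact le_top
  set U : ℚ → Set E := fun s => ⋃ q : ℚ, (if cq q < cq s then L q else ∅) with hUdef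
  have hUmeas : ∀ s, MeasurableSet (U s) := by
    intro s
    refine MeasurableSet.iUnion fun q => ?_
    by_cases h : cq q < cq s
    · rw [if_pos h]; exact hLmeas q
    · rw [if_neg h]; exact MeasurableSet.empty
  have hUle : ∀ s, ν (U s) ≤ cq s := by
    intro s
    refine (sigmaMaxitive_iUnion_le' hν _ (fun q => ?_)).trans (iSup_le fun q => ?_)
    · by_cases h : cq q < cq s
      · rw [if_pos h]; exact hLmeas q
      · rw [if_neg h]; exact MeasurableSet.empty
    · by_cases h : cq q < cq s
      · rw [if_pos h]; exact (hLle q).trans h.le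
      · rw [if_neg h, hmax.1]; exact zero_le
  have hF5 : ∀ (s : ℚ) (x : E), ¬ (cq s ≤ f x) → x ∈ U s := by
    intro s x h
    rw [hF2] at h
    push_neg at h
    obtain ⟨q, hxq, hlt⟩ := h
    exact mem_iUnion.2 ⟨q, by rw [if_pos hlt]; exact hxq⟩
  have hfmeas : Premeasurable f := by
    intro t
    have heq : {x | t < f x} = ⋃ q : ℚ, ({x | t < cq q} ∩ {x | cq q ≤ f x}) := by
      ext x
      simp only [mem_iUnion, mem_inter_iff, mem_setOf_eq]
      constructor
      · intro h
        obtain ⟨q, _, h1, h2⟩ := ENNReal.lt_iff_exists_rat_btwn.1 h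
        exact ⟨q, h1, h2.le⟩
      · rintro ⟨q, h1, h2⟩
        exact h1.trans_le h2
    rw [heq]
    refine MeasurableSet.iUnion fun q => MeasurableSet.inter ?_ ?_
    · by_cases h : t < cq q
      · have : {x : E | t < cq q} = univ := eq_univ_of_forall fun x => h
        rw [this]; exact MeasurableSet.univ
      · have : {x : E | t < cq q} = ∅ := eq_empty_iff_forall_notMem.2 fun x hx => h hx
        rw [this]; exact MeasurableSet.empty
    · have heq2 : {x | cq q ≤ f x} = ⋂ p : ℚ, {x | x ∈ L p → cq q ≤ cq p} := by
        ext x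
        simp only [mem_iInter, mem_setOf_eq, hF2]
      rw [heq2]
      refine MeasurableSet.iInter fun p => ?_
      by_cases h : cq q ≤ cq p
      · have : {x : E | x ∈ L p → cq q ≤ cq p} = univ :=
          eq_univ_of_forall fun x _ => h
        rw [this]; exact MeasurableSet.univ
      · have : {x : E | x ∈ L p → cq q ≤ cq p} = (L p)ᶜ := by
          ext x
          simp only [mem_setOf_eq, mem_compl_iff]
          exact ⟨fun hx hxL => h (hx hxL), fun hx hxL => absurd hxL hx⟩
        rw [this]; exact (hLmeas p).compl
  have hdens : ∀ {a b : ℝ≥0∞}, (∀ q : ℚ, b < cq q → a ≤ cq q) → a ≤ b := by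
    intro a b h
    by_contra hab
    push_neg at hab
    obtain ⟨q, _, hbq, hqa⟩ := ENNReal.lt_iff_exists_rat_btwn.1 hab
    exact absurd (h q hbq) (not_le.2 hqa)
  constructor
  · refine ⟨f, hfmeas, fun B hB => ?_⟩
    apply le_antisymm
    · apply le_sInf
      rintro t ⟨ht0, hneg⟩
      have hmeas_gt : MeasurableSet {x | t < f x} := hfmeas t
      have h1 : ν (B ∩ {x | t < f x}) = 0 :=
        meas_eq_zero_of_negligible' hmax (hB.inter hmeas_gt) hneg
      have h2 : ν B = ν (B ∩ {x | t < f x}ᶜ) := by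
        conv_lhs => rw [show B = (B ∩ {x | t < f x}) ∪ (B ∩ {x | t < f x}ᶜ) by
          rw [← inter_union_distrib_left, union_compl_self, inter_univ]]
        rw [hmax.2 _ _ (hB.inter hmeas_gt) (hB.inter hmeas_gt.compl), h1]
        simp
      rw [h2]
      apply hdens
      intro q hq
      have hsub : B ∩ {x | t < f x}ᶜ ⊆ U q := by
        intro x hx
        apply hF5
        intro hle
        have hft : f x ≤ t := not_lt.1 hx.2
        exact absurd (hq.trans_le (hle.trans hft)) (lt_irrefl t)
      exact (maxitive_mono' hmax (hB.inter hmeas_gt.compl) (hUmeas q) hsub).trans (hUle q)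
    · apply hdens
      intro q hq
      apply sInf_le
      refine ⟨lt_of_le_of_lt (zero_le) hq, ?_⟩
      refine negligible_mono' ?_ (hLmax q B hB hq.le)
      intro x hx
      refine ⟨hx.1, fun hxL => ?_⟩
      exact absurd (hF1 q x hxL) (not_le.2 hx.2)
  · intro hN
    refine ⟨f, hfmeas, fun B hB => ?_⟩
    apply le_antisymm
    · apply hdens
      intro q hq
      have hsub : B ⊆ U q := by
        intro x hx
        apply hF5
        intro hle
        have hxle : f x ≤ ⨆ y ∈ B, f y := le_biSup f hx
        exact absurd (hq.trans_le (hle.trans hxle)) (lt_irrefl _)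
      exact (maxitive_mono' hmax hB (hUmeas q) hsub).trans (hUle q)
    · refine iSup₂_le fun x hx => ?_
      apply hdens
      intro q hq
      have hempty : B \ L q = ∅ := hN _ (hLmax q B hB hq.le)
      have hxL : x ∈ L q := by
        by_contra hxL
        have hmem : x ∈ B \ L q := ⟨hx, hxL⟩
        rw [hempty] at hmem
        exact hmem
      exact hF1 q x hxL
end
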